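/- Fix integers n ≥ 1 and 1 ≤ m₀ ≤ n. For each m₀ ≤ m ≤ n let F_m : {0,1}^m → {0,1}^m be a pairwise independent random function, with F_{m₀},…,F_n mutually independent, and define r := r^{m₀} by the downward recursion r^{n+1} = id and r^m(x) = r^{m+1}(F_m(MSB_m(x)) ‖ LSB_{n−m}(x)). Then for every x ∈ {0,1}^n, the sum over all y ∈ {0,1}^n with y ≠ x of Pr[r(x) = r(y)] is at most n. -/

import Mathlib

open scoped BigOperators Classical

/-- Probability of an event under a (finite, weighted) probability mass function. -/
noncomputable def pr {Ω : Type*} [Fintype Ω] (p : Ω → ℝ) (E : Ω → Prop) : ℝ :=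
  ∑ ω, if E ω then p ω else 0

/-- The `m` most significant bits of an `n`-bit string (index `0` is most significant). -/
def msb {n : ℕ} (m : ℕ) (h : m ≤ n) (x : Fin n → Bool) : Fin m → Bool :=
  fun s => x ⟨s.1, lt_of_lt_of_le s.2 h⟩

/-- The `k` least significant bits of an `n`-bit string (junk `false` if `k > n`;
in all uses below `k ≤ n`). -/
def lsb {n : ℕ} (k : ℕ) (x : Fin n → Bool) : Fin k → Bool :=
  fun s => if h : n - k + (s : ℕ) < n then x ⟨n - k + s.1, h⟩ else false

/-- Replace the `m` most significant bits of `x` by `f m` applied to them,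
keeping the `n - m` least significant bits: this is `f_m(MSB_m(x)) ‖ LSB_{n-m}(x)`. -/
def rStep (n : ℕ) (f : ∀ m : ℕ, (Fin m → Bool) → (Fin m → Bool)) (m : ℕ) (h : m ≤ n)
    (x : Fin n → Bool) : Fin n → Bool :=
  fun t => if ht : (t : ℕ) < m then f m (msb m h x) ⟨t.1, ht⟩ else x t

/-- The downward recursion `r^{n+1} = id`, `r^m(x) = r^{m+1}(f_m(MSB_m(x)) ‖ LSB_{n-m}(x))`. -/
def rRec (n : ℕ) (f : ∀ m : ℕ, (Fin m → Bool) → (Fin m → Bool)) (m : ℕ)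
    (x : Fin n → Bool) : Fin n → Bool :=
  if h : m ≤ n then rRec n f (m + 1) (rStep n f m h x) else x
termination_by n + 1 - m
decreasing_by omega

/-! ### probability helper lemmas -/

section prL
variable {Ω : Type*} [Fintype Ω] (p : Ω → ℝ)

lemma pr_congr {E E' : Ω → Prop} (h : ∀ ω, E ω ↔ E' ω) : pr p E = pr p E' :=
  Finset.sum_congr rfl fun ω _ => by simp [h ω]

lemma pr_nonneg (hp0 : ∀ ω, 0 ≤ p ω) (E : Ω → Prop) : 0 ≤ pr p E :=
  Finset.sum_nonneg fun ω _ => by by_cases h : E ω <;> simp [h, hp0 ω]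

lemma pr_mono (hp0 : ∀ ω, 0 ≤ p ω) {E E' : Ω → Prop} (h : ∀ ω, E ω → E' ω) :
    pr p E ≤ pr p E' :=
  Finset.sum_le_sum fun ω _ => by
    by_cases hE : E ω
    · simp [hE, h ω hE]
    · by_cases hE' : E' ω <;> simp [hE, hE', hp0 ω]

lemma pr_true (hp1 : ∑ ω, p ω = 1) : pr p (fun _ => True) = 1 := by
  simpa [pr] using hp1

lemma pr_partition {α : Type*} [Fintype α] (V : Ω → α) (E : Ω → Prop) :
    pr p E = ∑ a : α, pr p (fun ω => E ω ∧ V ω = a) := by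
  unfold pr
  rw [Finset.sum_comm]
  refine Finset.sum_congr rfl fun ω _ => ?_
  by_cases hE : E ω
  · simp [hE]
  · simp [hE]

lemma pr_partition_one {α : Type*} [Fintype α] (hp1 : ∑ ω, p ω = 1) (V : Ω → α) :
    ∑ a : α, pr p (fun ω => V ω = a) = 1 := by
  have := pr_partition p V (fun _ => True)
  simp only [true_and] at this
  rw [← this, pr_true p hp1]

lemma pr_false : pr p (fun _ => False) = 0 := by simp [pr]

lemma pr_const_and (c : Prop) (E : Ω → Prop) :
    pr p (fun ω => c ∧ E ω) = if c then pr p E else 0 := by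
  by_cases hc : c
  · rw [if_pos hc]; exact pr_congr p fun ω => by simp [hc]
  · rw [if_neg hc]
    rw [pr_congr p (E' := fun _ => False) fun ω => by simp [hc]]
    exact pr_false p

lemma pr_or_le (hp0 : ∀ ω, 0 ≤ p ω) (A B : Ω → Prop) :
    pr p (fun ω => A ω ∨ B ω) ≤ pr p A + pr p B := by
  unfold pr
  rw [← Finset.sum_add_distrib]
  refine Finset.sum_le_sum fun ω _ => ?_
  by_cases hA : A ω <;> by_cases hB : B ω <;> simp [hA, hB, hp0 ω]

lemma pr_union_bound (hp0 : ∀ ω, 0 ≤ p ω) {ι : Type*} (s : Finset ι) (Q : ι → Ω → Prop) :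
    pr p (fun ω => ∃ i ∈ s, Q i ω) ≤ ∑ i ∈ s, pr p (Q i) := by
  classical
  induction s using Finset.induction with
  | empty => simp [pr]
  | @insert j s hj ih =>
    rw [Finset.sum_insert hj]
    refine le_trans (le_trans (pr_mono p hp0 (E' := fun ω => Q j ω ∨ ∃ i ∈ s, Q i ω) ?_)
      (pr_or_le p hp0 _ _)) (by linarith)
    intro ω ⟨i, hi, hQ⟩
    rcases Finset.mem_insert.mp hi with rfl | hi
    · exact Or.inl hQ
    · exact Or.inr ⟨i, hi, hQ⟩

end prL

/-! ### deterministic evolution of the labels -/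

/-- forward states: `stepFold n f m₀ x j` is the state after applying stages `m₀,…,m₀+j-1`. -/
def stepFold (n : ℕ) (f : ∀ m : ℕ, (Fin m → Bool) → (Fin m → Bool)) (m₀ : ℕ)
    (x : Fin n → Bool) : ℕ → (Fin n → Bool)
  | 0 => x
  | j+1 => if h : m₀ + j ≤ n then rStep n f (m₀ + j) h (stepFold n f m₀ x j)
           else stepFold n f m₀ x j

lemma rRec_step (n : ℕ) (f : ∀ m : ℕ, (Fin m → Bool) → (Fin m → Bool)) (m : ℕ) (h : m ≤ n)
    (x : Fin n → Bool) : rRec n f m x = rRec n f (m+1) (rStep n f m h x) := by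
  rw [rRec]; simp [h]

lemma rRec_stop (n : ℕ) (f : ∀ m : ℕ, (Fin m → Bool) → (Fin m → Bool)) (m : ℕ) (h : ¬ m ≤ n)
    (x : Fin n → Bool) : rRec n f m x = x := by
  rw [rRec]; simp [h]

lemma rRec_eq_stepFold (n : ℕ) (f : ∀ m : ℕ, (Fin m → Bool) → (Fin m → Bool)) (m₀ : ℕ)
    (hm : m₀ ≤ n + 1) (x : Fin n → Bool) :
    rRec n f m₀ x = stepFold n f m₀ x (n + 1 - m₀) := by
  suffices H : ∀ j, m₀ + j ≤ n + 1 → rRec n f m₀ x = rRec n f (m₀ + j) (stepFold n f m₀ x j) by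
    have h2 : m₀ + (n + 1 - m₀) = n + 1 := by omega
    rw [H (n + 1 - m₀) (by omega), h2, rRec_stop n f (n+1) (by omega)]
  intro j
  induction j with
  | zero => intro _; simp [stepFold]
  | succ j ih =>
    intro hj
    have h1 : m₀ + j ≤ n := by omega
    rw [ih (by omega), rRec_step n f (m₀ + j) h1, stepFold]
    simp [h1, Nat.add_assoc]

/-- high bits are never modified -/
lemma stepFold_high (n : ℕ) (f : ∀ m : ℕ, (Fin m → Bool) → (Fin m → Bool)) (m₀ : ℕ)
    (x : Fin n → Bool) (j : ℕ) (t : Fin n) (ht : m₀ + j ≤ t.1 + 1) :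
    stepFold n f m₀ x j t = x t := by
  induction j with
  | zero => rfl
  | succ j ih =>
    rw [stepFold]
    by_cases h : m₀ + j ≤ n
    · simp only [dif_pos h, rStep, dif_neg (by omega : ¬ (t:ℕ) < m₀ + j)]
      exact ih (by omega)
    · simp only [dif_neg h]; exact ih (by omega)

/-- the state after `j` stages depends only on `f k` for `m₀ ≤ k < m₀ + j` -/
lemma stepFold_congr (n : ℕ) (f f' : ∀ m : ℕ, (Fin m → Bool) → (Fin m → Bool)) (m₀ : ℕ)
    (x : Fin n → Bool) (j : ℕ) (hff : ∀ k, m₀ ≤ k → k < m₀ + j → f k = f' k) :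
    stepFold n f m₀ x j = stepFold n f' m₀ x j := by
  induction j with
  | zero => rfl
  | succ j ih =>
    have hij : stepFold n f m₀ x j = stepFold n f' m₀ x j :=
      ih fun k h1 h2 => hff k h1 (by omega)
    rw [stepFold, stepFold, hij]
    by_cases h : m₀ + j ≤ n
    · simp only [dif_pos h]
      funext t
      simp only [rStep, hff (m₀ + j) (by omega) (by omega)]
    · simp [h]

/-- first-merge extraction -/
lemma exists_merge {α : Type*} (s t : ℕ → α) (J : ℕ) (h0 : s 0 ≠ t 0) (hJ : s J = t J) :
    ∃ j < J, s j ≠ t j ∧ s (j+1) = t (j+1) := by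
  induction J with
  | zero => exact absurd hJ h0
  | succ J ih =>
    by_cases h : s J = t J
    · obtain ⟨j, hj, h1, h2⟩ := ih h
      exact ⟨j, by omega, h1, h2⟩
    · exact ⟨J, by omega, h, hJ⟩

/-! ### independence -/

section ind
variable {Ω : Type*} [Fintype Ω] (p : Ω → ℝ)
variable (n m₀ : ℕ) (F : ∀ m : ℕ, Ω → (Fin m → Bool) → (Fin m → Bool))

/-- independence of an event determined by the other coordinates from `F m`. -/
lemma ind_main
    (hp1 : ∑ ω, p ω = 1)
    (hInd : ∀ g : ∀ m : ℕ, (Fin m → Bool) → (Fin m → Bool),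
      pr p (fun ω => ∀ m ∈ Finset.Icc m₀ n, F m ω = g m)
        = ∏ m ∈ Finset.Icc m₀ n, pr p (fun ω => F m ω = g m))
    (m : ℕ) (hm : m ∈ Finset.Icc m₀ n)
    (A : Ω → Prop)
    (hA : ∀ ω ω', (∀ k ∈ Finset.Icc m₀ n, k ≠ m → F k ω = F k ω') → A ω → A ω')
    (g : (Fin m → Bool) → (Fin m → Bool)) :
    pr p (fun ω => A ω ∧ F m ω = g)
      = pr p A * pr p (fun ω => F m ω = g) := by
  classical
  set D := (Finset.Icc m₀ n).erase m with hD
  let β := ∀ k : {k // k ∈ D}, (Fin (k : ℕ) → Bool) → (Fin (k : ℕ) → Bool)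
  let Vrest : Ω → β := fun ω k => F k ω
  let P : β → ℝ := fun h => ∏ k ∈ D.attach, pr p (fun ω => F (k : ℕ) ω = h k)
  have claimA : ∀ (g' : (Fin m → Bool) → (Fin m → Bool)) (h : β),
      pr p (fun ω => F m ω = g' ∧ Vrest ω = h)
        = pr p (fun ω => F m ω = g') * P h := by
    intro g' h
    set base : ∀ k : ℕ, (Fin k → Bool) → (Fin k → Bool) :=
      fun k => if hk : k ∈ D then h ⟨k, hk⟩ else id with hbase
    set gg : ∀ k : ℕ, (Fin k → Bool) → (Fin k → Bool) := Function.update base m g' with hgg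
    have hggm : gg m = g' := Function.update_self m g' base
    have hggk : ∀ k, k ≠ m → gg k = base k := fun k hk => Function.update_of_ne hk g' base
    have hiff : ∀ ω, (F m ω = g' ∧ Vrest ω = h) ↔ (∀ k ∈ Finset.Icc m₀ n, F k ω = gg k) := by
      intro ω
      constructor
      · rintro ⟨h1, h2⟩ k hk
        by_cases hkm : k = m
        · subst hkm; rw [hggm]; exact h1
        · have hkD : k ∈ D := Finset.mem_erase.mpr ⟨hkm, hk⟩
          rw [hggk k hkm, hbase]
          simp only [dif_pos hkD]
          exact congrFun h2 ⟨k, hkD⟩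
      · intro hall
        constructor
        · rw [← hggm]; exact hall m hm
        · funext k
          have hkIcc : (k : ℕ) ∈ Finset.Icc m₀ n := Finset.mem_of_mem_erase k.2
          have hkm : (k : ℕ) ≠ m := (Finset.mem_erase.mp k.2).1
          have := hall k hkIcc
          rw [hggk k hkm, hbase] at this
          simp only [dif_pos k.2] at this
          simpa using this
    rw [pr_congr p hiff, hInd gg]
    rw [← Finset.mul_prod_erase _ _ hm, hggm, ← hD]
    congr 1
    rw [← Finset.prod_attach D (fun k => pr p (fun ω => F k ω = gg k))]
    refine Finset.prod_congr rfl fun k _ => ?_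
    have hkm : (k : ℕ) ≠ m := (Finset.mem_erase.mp k.2).1
    rw [hggk k hkm, hbase]
    simp only [dif_pos k.2]
  have claimB : ∀ h : β, pr p (fun ω => Vrest ω = h) = P h := by
    intro h
    rw [pr_partition p (fun ω => F m ω) (fun ω => Vrest ω = h)]
    have : ∀ g' : (Fin m → Bool) → (Fin m → Bool),
        pr p (fun ω => Vrest ω = h ∧ F m ω = g')
          = pr p (fun ω => F m ω = g') * P h := by
      intro g'
      rw [pr_congr p (E' := fun ω => F m ω = g' ∧ Vrest ω = h) fun ω => by tauto]
      exact claimA g' h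
    rw [Finset.sum_congr rfl fun g' _ => this g']
    rw [← Finset.sum_mul, pr_partition_one p hp1 (fun ω => F m ω), one_mul]
  let Ah : β → Prop := fun h => ∃ ω₀, Vrest ω₀ = h ∧ A ω₀
  have hAdet : ∀ (h : β) (ω), Vrest ω = h → (A ω ↔ Ah h) := by
    intro h ω hV
    constructor
    · intro hAω; exact ⟨ω, hV, hAω⟩
    · rintro ⟨ω₀, hV₀, hA₀⟩
      refine hA ω₀ ω (fun k hk hkm => ?_) hA₀
      have hkD : k ∈ D := Finset.mem_erase.mpr ⟨hkm, hk⟩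
      exact (congrFun hV₀ ⟨k, hkD⟩).trans (congrFun hV ⟨k, hkD⟩).symm
  have expandA : ∀ E : Ω → Prop,
      pr p (fun ω => A ω ∧ E ω)
        = ∑ h : β, if Ah h then pr p (fun ω => E ω ∧ Vrest ω = h) else 0 := by
    intro E
    rw [pr_partition p Vrest (fun ω => A ω ∧ E ω)]
    refine Finset.sum_congr rfl fun h _ => ?_
    rw [pr_congr p (E' := fun ω => Ah h ∧ (E ω ∧ Vrest ω = h)) fun ω => by
      constructor
      · rintro ⟨⟨hAω, hE⟩, hV⟩; exact ⟨(hAdet h ω hV).mp hAω, hE, hV⟩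
      · rintro ⟨hAh, hE, hV⟩; exact ⟨⟨(hAdet h ω hV).mpr hAh, hE⟩, hV⟩]
    by_cases hAh : Ah h
    · rw [if_pos hAh]; exact pr_congr p fun ω => by simp [hAh]
    · rw [if_neg hAh, pr_congr p (E' := fun _ => False) fun ω => by simp [hAh]]
      exact pr_false p
  have e1 := expandA (fun ω => F m ω = g)
  have e2 : pr p A = ∑ h : β, if Ah h then P h else 0 := by
    have := expandA (fun _ => True)
    rw [pr_congr p (E := A) (E' := fun ω => A ω ∧ True) (fun ω => by tauto), this]
    refine Finset.sum_congr rfl fun h _ => ?_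
    rw [pr_congr p (E' := fun ω => Vrest ω = h) (fun ω => by tauto), claimB h]
  rw [e1, e2, Finset.sum_mul]
  refine Finset.sum_congr rfl fun h _ => ?_
  by_cases hAh : Ah h
  · simp only [if_pos hAh, claimA g h]; ring
  · simp [hAh]

/-- independence for a general predicate of `F m`. -/
lemma ind_pred
    (hp1 : ∑ ω, p ω = 1)
    (hInd : ∀ g : ∀ m : ℕ, (Fin m → Bool) → (Fin m → Bool),
      pr p (fun ω => ∀ m ∈ Finset.Icc m₀ n, F m ω = g m)
        = ∏ m ∈ Finset.Icc m₀ n, pr p (fun ω => F m ω = g m))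
    (m : ℕ) (hm : m ∈ Finset.Icc m₀ n)
    (A : Ω → Prop)
    (hA : ∀ ω ω', (∀ k ∈ Finset.Icc m₀ n, k ≠ m → F k ω = F k ω') → A ω → A ω')
    (C : ((Fin m → Bool) → (Fin m → Bool)) → Prop) :
    pr p (fun ω => A ω ∧ C (F m ω))
      = pr p A * pr p (fun ω => C (F m ω)) := by
  classical
  rw [pr_partition p (fun ω => F m ω) (fun ω => A ω ∧ C (F m ω))]
  have : ∀ g, pr p (fun ω => (A ω ∧ C (F m ω)) ∧ F m ω = g)
      = if C g then pr p A * pr p (fun ω => F m ω = g) else 0 := by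
    intro g
    rw [pr_congr p (E' := fun ω => C g ∧ (A ω ∧ F m ω = g)) fun ω => by
      constructor
      · rintro ⟨⟨hAω, hC⟩, hg⟩; exact ⟨hg ▸ hC, hAω, hg⟩
      · rintro ⟨hC, hAω, hg⟩; exact ⟨⟨hAω, hg ▸ hC⟩, hg⟩]
    rw [pr_const_and p _ _]
    by_cases hC : C g
    · rw [if_pos hC, if_pos hC, ind_main p n m₀ F hp1 hInd m hm A hA g]
    · simp [hC]
  rw [Finset.sum_congr rfl fun g _ => this g]
  have rhs : ∀ g, pr p (fun ω => C (F m ω) ∧ F m ω = g)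
      = if C g then pr p (fun ω => F m ω = g) else 0 := by
    intro g
    rw [pr_congr p (E' := fun ω => C g ∧ F m ω = g) fun ω => by
      constructor
      · rintro ⟨hCω, hg⟩; exact ⟨hg ▸ hCω, hg⟩
      · rintro ⟨hC, hg⟩; exact ⟨hg ▸ hC, hg⟩]
    exact pr_const_and p _ _
  rw [pr_partition p (fun ω => F m ω) (fun ω => C (F m ω)),
    Finset.sum_congr rfl fun g _ => rhs g, Finset.mul_sum]
  refine Finset.sum_congr rfl fun g _ => ?_
  by_cases hC : C g <;> simp [hC]

/-- collision probability of a pairwise independent function. -/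
lemma coll_prob
    (hFpair : ∀ m, m₀ ≤ m → m ≤ n → ∀ x y : Fin m → Bool, x ≠ y →
      ∀ a b : Fin m → Bool,
        pr p (fun ω => F m ω x = a ∧ F m ω y = b) = ((1 : ℝ) / 2 ^ m) ^ 2)
    (m : ℕ) (hm1 : m₀ ≤ m) (hm2 : m ≤ n) (u v : Fin m → Bool) (huv : u ≠ v) :
    pr p (fun ω => F m ω u = F m ω v) = (1 : ℝ) / 2 ^ m := by
  classical
  rw [pr_partition p (fun ω => F m ω u)]
  have key : ∀ a, pr p (fun ω => F m ω u = F m ω v ∧ F m ω u = a) = ((1:ℝ)/2^m)^2 := by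
    intro a
    rw [pr_congr p (E' := fun ω => F m ω u = a ∧ F m ω v = a) fun ω => by
      constructor
      · rintro ⟨h1, h2⟩; exact ⟨h2, h1 ▸ h2⟩
      · rintro ⟨h1, h2⟩; exact ⟨h1.trans h2.symm, h1⟩]
    exact hFpair m hm1 hm2 u v huv a a
  rw [Finset.sum_congr rfl fun a _ => key a, Finset.sum_const, Finset.card_univ]
  have hcard : Fintype.card (Fin m → Bool) = 2 ^ m := by simp
  rw [hcard, nsmul_eq_mul]
  have h2 : (2:ℝ) ^ m ≠ 0 := by positivity
  push_cast
  field_simp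

end ind
section merge
variable {Ω : Type*} [Fintype Ω] (p : Ω → ℝ)
variable (n m₀ : ℕ) (F : ∀ m : ℕ, Ω → (Fin m → Bool) → (Fin m → Bool))

/-- probability that the chains merge at stage `m` is at most `2^{-m}`. -/
lemma merge_prob
    (hp0 : ∀ ω, 0 ≤ p ω) (hp1 : ∑ ω, p ω = 1)
    (hFpair : ∀ m, m₀ ≤ m → m ≤ n → ∀ x y : Fin m → Bool, x ≠ y →
      ∀ a b : Fin m → Bool,
        pr p (fun ω => F m ω x = a ∧ F m ω y = b) = ((1 : ℝ) / 2 ^ m) ^ 2)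
    (hInd : ∀ g : ∀ m : ℕ, (Fin m → Bool) → (Fin m → Bool),
      pr p (fun ω => ∀ m ∈ Finset.Icc m₀ n, F m ω = g m)
        = ∏ m ∈ Finset.Icc m₀ n, pr p (fun ω => F m ω = g m))
    (m : ℕ) (hm1 : m₀ ≤ m) (hmn : m ≤ n) (x y : Fin n → Bool) :
    pr p (fun ω =>
        msb m hmn (stepFold n (fun k => F k ω) m₀ x (m - m₀))
          ≠ msb m hmn (stepFold n (fun k => F k ω) m₀ y (m - m₀))
        ∧ F m ω (msb m hmn (stepFold n (fun k => F k ω) m₀ x (m - m₀)))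
          = F m ω (msb m hmn (stepFold n (fun k => F k ω) m₀ y (m - m₀))))
      ≤ (1 : ℝ) / 2 ^ m := by
  classical
  have hmIcc : m ∈ Finset.Icc m₀ n := Finset.mem_Icc.mpr ⟨hm1, hmn⟩
  set VX : Ω → (Fin m → Bool) :=
    fun ω => msb m hmn (stepFold n (fun k => F k ω) m₀ x (m - m₀)) with hVX
  set VY : Ω → (Fin m → Bool) :=
    fun ω => msb m hmn (stepFold n (fun k => F k ω) m₀ y (m - m₀)) with hVY
  set V : Ω → (Fin m → Bool) × (Fin m → Bool) := fun ω => (VX ω, VY ω) with hV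
  rw [pr_partition p V (fun ω => VX ω ≠ VY ω ∧ F m ω (VX ω) = F m ω (VY ω))]
  have hAdep : ∀ a : (Fin m → Bool) × (Fin m → Bool), ∀ ω ω',
      (∀ k ∈ Finset.Icc m₀ n, k ≠ m → F k ω = F k ω') → V ω = a → V ω' = a := by
    intro a ω ω' hk hVa
    have hf : ∀ k, m₀ ≤ k → k < m₀ + (m - m₀) → F k ω = F k ω' := by
      intro k h1 h2
      exact hk k (Finset.mem_Icc.mpr ⟨h1, by omega⟩) (by omega)
    have hx : stepFold n (fun k => F k ω) m₀ x (m - m₀)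
        = stepFold n (fun k => F k ω') m₀ x (m - m₀) :=
      stepFold_congr n _ _ m₀ x (m - m₀) hf
    have hy : stepFold n (fun k => F k ω) m₀ y (m - m₀)
        = stepFold n (fun k => F k ω') m₀ y (m - m₀) :=
      stepFold_congr n _ _ m₀ y (m - m₀) hf
    rw [← hVa, hV]
    simp only [hVX, hVY, hx, hy]
  have hterm : ∀ a : (Fin m → Bool) × (Fin m → Bool),
      pr p (fun ω => (VX ω ≠ VY ω ∧ F m ω (VX ω) = F m ω (VY ω)) ∧ V ω = a)
        ≤ pr p (fun ω => V ω = a) * ((1:ℝ) / 2 ^ m) := by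
    intro a
    by_cases hau : a.1 = a.2
    · rw [pr_congr p (E' := fun _ => False) fun ω => by
        constructor
        · rintro ⟨⟨hne, _⟩, hVa⟩
          apply hne
          have h1 : VX ω = a.1 := congrArg Prod.fst hVa
          have h2 : VY ω = a.2 := congrArg Prod.snd hVa
          rw [h1, h2, hau]
        · exact False.elim]
      rw [pr_false]
      have := pr_nonneg p hp0 (fun ω => V ω = a)
      positivity
    · rw [pr_congr p (E' := fun ω => V ω = a ∧ F m ω a.1 = F m ω a.2) fun ω => by
        constructor
        · rintro ⟨⟨hne, heq⟩, hVa⟩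
          have h1 : VX ω = a.1 := congrArg Prod.fst hVa
          have h2 : VY ω = a.2 := congrArg Prod.snd hVa
          exact ⟨hVa, h1 ▸ h2 ▸ heq⟩
        · rintro ⟨hVa, heq⟩
          have h1 : VX ω = a.1 := congrArg Prod.fst hVa
          have h2 : VY ω = a.2 := congrArg Prod.snd hVa
          refine ⟨⟨?_, ?_⟩, hVa⟩
          · rw [h1, h2]; exact hau
          · rw [h1, h2]; exact heq]
      rw [ind_pred p n m₀ F hp1 hInd m hmIcc (fun ω => V ω = a)
        (fun ω ω' hk hVa => hAdep a ω ω' hk hVa) (fun gm => gm a.1 = gm a.2)]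
      rw [coll_prob p n m₀ F hFpair m hm1 hmn a.1 a.2 hau]
  calc ∑ a, pr p (fun ω => (VX ω ≠ VY ω ∧ F m ω (VX ω) = F m ω (VY ω)) ∧ V ω = a)
      ≤ ∑ a, pr p (fun ω => V ω = a) * ((1:ℝ) / 2 ^ m) :=
        Finset.sum_le_sum fun a _ => hterm a
    _ = (1:ℝ) / 2 ^ m := by
        rw [← Finset.sum_mul, pr_partition_one p hp1 V, one_mul]

/-- per-pair collision bound. -/
lemma collision_bound
    (hm₀n : m₀ ≤ n)
    (hp0 : ∀ ω, 0 ≤ p ω) (hp1 : ∑ ω, p ω = 1)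
    (hFpair : ∀ m, m₀ ≤ m → m ≤ n → ∀ x y : Fin m → Bool, x ≠ y →
      ∀ a b : Fin m → Bool,
        pr p (fun ω => F m ω x = a ∧ F m ω y = b) = ((1 : ℝ) / 2 ^ m) ^ 2)
    (hInd : ∀ g : ∀ m : ℕ, (Fin m → Bool) → (Fin m → Bool),
      pr p (fun ω => ∀ m ∈ Finset.Icc m₀ n, F m ω = g m)
        = ∏ m ∈ Finset.Icc m₀ n, pr p (fun ω => F m ω = g m))
    (x y : Fin n → Bool) (hxy : x ≠ y) :
    pr p (fun ω => rRec n (fun m => F m ω) m₀ x = rRec n (fun m => F m ω) m₀ y)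
      ≤ ∑ m ∈ Finset.Icc m₀ n,
          (if ∀ t : Fin n, m ≤ (t:ℕ) → x t = y t then ((1:ℝ)/2^m) else 0) := by
  classical
  set sy := (Finset.Icc m₀ n).filter (fun m => ∀ t : Fin n, m ≤ (t:ℕ) → x t = y t) with hsy
  set M : ℕ → Ω → Prop := fun m ω => ∃ h : m ≤ n,
      msb m h (stepFold n (fun k => F k ω) m₀ x (m - m₀))
        ≠ msb m h (stepFold n (fun k => F k ω) m₀ y (m - m₀))
      ∧ F m ω (msb m h (stepFold n (fun k => F k ω) m₀ x (m - m₀)))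
        = F m ω (msb m h (stepFold n (fun k => F k ω) m₀ y (m - m₀))) with hM
  have step1 : ∀ ω, rRec n (fun m => F m ω) m₀ x = rRec n (fun m => F m ω) m₀ y →
      ∃ m ∈ sy, M m ω := by
    intro ω hE
    set f : ∀ k : ℕ, (Fin k → Bool) → (Fin k → Bool) := fun k => F k ω with hf
    have hJ : stepFold n f m₀ x (n + 1 - m₀) = stepFold n f m₀ y (n + 1 - m₀) := by
      rw [← rRec_eq_stepFold n f m₀ (by omega) x, ← rRec_eq_stepFold n f m₀ (by omega) y]
      exact hE
    obtain ⟨j, hjJ, hne, heq⟩ :=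
      exists_merge (stepFold n f m₀ x) (stepFold n f m₀ y) (n + 1 - m₀) hxy hJ
    have hmn : m₀ + j ≤ n := by omega
    have hs : rStep n f (m₀ + j) hmn (stepFold n f m₀ x j)
        = rStep n f (m₀ + j) hmn (stepFold n f m₀ y j) := by
      have h' := heq
      simp only [stepFold, dif_pos hmn] at h'
      exact h'
    have hagr : ∀ t : Fin n, m₀ + j ≤ (t:ℕ) → x t = y t := by
      intro t ht
      have h1 := congrFun hs t
      simp only [rStep, dif_neg (by omega : ¬ (t:ℕ) < m₀ + j)] at h1
      rwa [stepFold_high n f m₀ x j t (by omega), stepFold_high n f m₀ y j t (by omega)] at h1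
    have hmsb : msb (m₀ + j) hmn (stepFold n f m₀ x j)
        ≠ msb (m₀ + j) hmn (stepFold n f m₀ y j) := by
      intro hcon
      apply hne
      funext t
      by_cases ht : (t:ℕ) < m₀ + j
      · exact congrFun hcon ⟨t.1, ht⟩
      · rw [stepFold_high n f m₀ x j t (by omega), stepFold_high n f m₀ y j t (by omega)]
        exact hagr t (by omega)
    have hFeq : f (m₀ + j) (msb (m₀ + j) hmn (stepFold n f m₀ x j))
        = f (m₀ + j) (msb (m₀ + j) hmn (stepFold n f m₀ y j)) := by
      funext s
      have h1 := congrFun hs ⟨s.1, lt_of_lt_of_le s.2 hmn⟩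
      simp only [rStep, dif_pos (show ((⟨s.1, lt_of_lt_of_le s.2 hmn⟩ : Fin n) : ℕ) < m₀ + j
        from s.2)] at h1
      exact h1
    refine ⟨m₀ + j, Finset.mem_filter.mpr ⟨Finset.mem_Icc.mpr ⟨by omega, hmn⟩, hagr⟩, ?_⟩
    have hjj : m₀ + j - m₀ = j := by omega
    exact ⟨hmn, by rw [hjj]; exact ⟨hmsb, hFeq⟩⟩
  calc pr p (fun ω => rRec n (fun m => F m ω) m₀ x = rRec n (fun m => F m ω) m₀ y)
      ≤ pr p (fun ω => ∃ m ∈ sy, M m ω) := pr_mono p hp0 step1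
    _ ≤ ∑ m ∈ sy, pr p (M m) := pr_union_bound p hp0 sy M
    _ ≤ ∑ m ∈ sy, (1:ℝ)/2^m := by
        refine Finset.sum_le_sum fun m hm => ?_
        have hmIcc : m ∈ Finset.Icc m₀ n := (Finset.mem_filter.mp hm).1
        obtain ⟨hm1, hmn⟩ := Finset.mem_Icc.mp hmIcc
        have : pr p (M m) = pr p (fun ω =>
            msb m hmn (stepFold n (fun k => F k ω) m₀ x (m - m₀))
              ≠ msb m hmn (stepFold n (fun k => F k ω) m₀ y (m - m₀))
            ∧ F m ω (msb m hmn (stepFold n (fun k => F k ω) m₀ x (m - m₀)))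
              = F m ω (msb m hmn (stepFold n (fun k => F k ω) m₀ y (m - m₀)))) := by
          refine pr_congr p fun ω => ?_
          constructor
          · rintro ⟨h, hP⟩; exact hP
          · intro hP; exact ⟨hmn, hP⟩
        rw [this]
        exact merge_prob p n m₀ F hp0 hp1 hFpair hInd m hm1 hmn x y
    _ = ∑ m ∈ Finset.Icc m₀ n,
          (if ∀ t : Fin n, m ≤ (t:ℕ) → x t = y t then ((1:ℝ)/2^m) else 0) := by
        rw [hsy, Finset.sum_filter]

end merge
/-- For every `x`, the sum over all `y ≠ x` of the collision
probability `Pr[r(x) = r(y)]` of the multi-cut labelling map is at most `n`. -/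
theorem statement7
    (n m₀ : ℕ) (hn : 1 ≤ n) (hm₀ : 1 ≤ m₀) (hm₀n : m₀ ≤ n)
    (Ω : Type*) [Fintype Ω] (p : Ω → ℝ)
    (hp0 : ∀ ω, 0 ≤ p ω) (hp1 : ∑ ω, p ω = 1)
    (F : ∀ m : ℕ, Ω → (Fin m → Bool) → (Fin m → Bool))
    -- each `F m` (for `m₀ ≤ m ≤ n`) is a pairwise independent random function
    (hFpair : ∀ m, m₀ ≤ m → m ≤ n → ∀ x y : Fin m → Bool, x ≠ y →
      ∀ a b : Fin m → Bool,
        pr p (fun ω => F m ω x = a ∧ F m ω y = b) = ((1 : ℝ) / 2 ^ m) ^ 2)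
    -- `F_{m₀}, …, F_n` are mutually independent
    (hInd : ∀ g : ∀ m : ℕ, (Fin m → Bool) → (Fin m → Bool),
      pr p (fun ω => ∀ m ∈ Finset.Icc m₀ n, F m ω = g m)
        = ∏ m ∈ Finset.Icc m₀ n, pr p (fun ω => F m ω = g m))
    (x : Fin n → Bool) :
    ∑ y ∈ Finset.univ.filter (fun y : Fin n → Bool => y ≠ x),
        pr p (fun ω => rRec n (fun m => F m ω) m₀ x = rRec n (fun m => F m ω) m₀ y)
      ≤ (n : ℝ) := by
  classical
  have key : ∀ y : Fin n → Bool, y ≠ x →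
      pr p (fun ω => rRec n (fun m => F m ω) m₀ x = rRec n (fun m => F m ω) m₀ y)
        ≤ ∑ m ∈ Finset.Icc m₀ n,
            (if ∀ t : Fin n, m ≤ (t:ℕ) → x t = y t then ((1:ℝ)/2^m) else 0) :=
    fun y hy => collision_bound p n m₀ F hm₀n hp0 hp1 hFpair hInd x y (fun h => hy h.symm)
  calc ∑ y ∈ Finset.univ.filter (fun y : Fin n → Bool => y ≠ x),
        pr p (fun ω => rRec n (fun m => F m ω) m₀ x = rRec n (fun m => F m ω) m₀ y)
      ≤ ∑ y ∈ Finset.univ.filter (fun y : Fin n → Bool => y ≠ x),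
          ∑ m ∈ Finset.Icc m₀ n,
            (if ∀ t : Fin n, m ≤ (t:ℕ) → x t = y t then ((1:ℝ)/2^m) else 0) :=
        Finset.sum_le_sum fun y hy => key y (Finset.mem_filter.mp hy).2
    _ = ∑ m ∈ Finset.Icc m₀ n, ∑ y ∈ Finset.univ.filter (fun y : Fin n → Bool => y ≠ x),
            (if ∀ t : Fin n, m ≤ (t:ℕ) → x t = y t then ((1:ℝ)/2^m) else 0) :=
        Finset.sum_comm
    _ ≤ ∑ m ∈ Finset.Icc m₀ n, (1:ℝ) := by
        refine Finset.sum_le_sum fun m hm => ?_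
        obtain ⟨hm1, hmn⟩ := Finset.mem_Icc.mp hm
        set s2 := (Finset.univ.filter (fun y : Fin n → Bool => y ≠ x)).filter
            (fun y => ∀ t : Fin n, m ≤ (t:ℕ) → x t = y t) with hs2
        have hsum : ∑ y ∈ Finset.univ.filter (fun y : Fin n → Bool => y ≠ x),
            (if ∀ t : Fin n, m ≤ (t:ℕ) → x t = y t then ((1:ℝ)/2^m) else 0)
            = (s2.card : ℝ) * ((1:ℝ)/2^m) := by
          rw [hs2, ← Finset.sum_filter, Finset.sum_const, nsmul_eq_mul]
        have hcard : s2.card ≤ 2 ^ m := by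
          have : s2.card ≤ (Finset.univ : Finset (Fin m → Bool)).card := by
            refine Finset.card_le_card_of_injOn (fun y => msb m hmn y)
              (fun _ _ => Finset.mem_univ _) ?_
            intro y hy y' hy' hmsb
            have hy2 := (Finset.mem_filter.mp (Finset.mem_coe.mp hy)).2
            have hy2' := (Finset.mem_filter.mp (Finset.mem_coe.mp hy')).2
            funext t
            by_cases ht : (t:ℕ) < m
            · exact congrFun hmsb ⟨t.1, ht⟩
            · rw [← hy2 t (by omega), ← hy2' t (by omega)]
          simpa using this
        rw [hsum]
        have h2 : (0:ℝ) < 2 ^ m := by positivity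
        calc (s2.card : ℝ) * ((1:ℝ)/2^m) ≤ (2^m : ℝ) * ((1:ℝ)/2^m) := by
              apply mul_le_mul_of_nonneg_right _ (by positivity)
              exact_mod_cast hcard
          _ = 1 := by field_simp
    _ = ((Finset.Icc m₀ n).card : ℝ) := by rw [Finset.sum_const, nsmul_eq_mul, mul_one]
    _ ≤ (n : ℝ) := by
        rw [Nat.card_Icc]
        exact_mod_cast (by omega : n + 1 - m₀ ≤ n)
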